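/- arXiv:2108.00445 — 4 statements merged into one kernel-verified Lean document; each statement's English description precedes it below -/
import Mathlib

section
/- Let U : ℝ^{n×n} → ℝ be a C¹ function invariant under left and right multiplication by orthogonal matrices, i.e. U(RPS) = U(P) for all orthogonal R, S. If P has singular value decomposition P = RΛSᵀ with distinct singular values, then the gradient matrix ∂U/∂P at P equals R·D·Sᵀ, where D is the diagonal matrix whose entries are ∂U/∂P_{ii} evaluated at the diagonal matrix Λ. -/
open Matrix

attribute [local instance] Matrix.normedAddCommGroup Matrix.normedSpace

/-- If U : ℝ^{n×n} → ℝ is C¹ and invariant under left and right multiplication by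
orthogonal matrices, and P = RΛSᵀ is a singular value decomposition with distinct
(positive) singular values, then the gradient matrix (∂U/∂P_{ij}) at P equals
R·D·Sᵀ, where D = diag{∂U/∂P_{ii} evaluated at Λ}. -/
theorem stmt_0 (n : ℕ) (U : Matrix (Fin n) (Fin n) ℝ → ℝ)
    (hU : ContDiff ℝ 1 U)
    (hinv : ∀ R S P : Matrix (Fin n) (Fin n) ℝ,
      R * Matrix.transpose R = 1 → Matrix.transpose R * R = 1 →
      S * Matrix.transpose S = 1 → Matrix.transpose S * S = 1 →
      U (R * P * S) = U P)
    (P R S : Matrix (Fin n) (Fin n) ℝ) (a : Fin n → ℝ)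
    (hR : R * Matrix.transpose R = 1) (hR' : Matrix.transpose R * R = 1)
    (hS : S * Matrix.transpose S = 1) (hS' : Matrix.transpose S * S = 1)
    (hapos : ∀ i, 0 < a i) (hadist : Function.Injective a)
    (hSVD : P = R * Matrix.diagonal a * Matrix.transpose S) :
    (Matrix.of fun i j =>
        fderiv ℝ U P (Matrix.single i j 1))
      = R * Matrix.diagonal (fun i =>
          fderiv ℝ U (Matrix.diagonal a) (Matrix.single i i 1))
        * Matrix.transpose S := by
  have hdiff : ∀ X : Matrix (Fin n) (Fin n) ℝ, DifferentiableAt ℝ U X := fun X =>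
    (hU.differentiable one_ne_zero).differentiableAt
  -- key conjugation lemma
  have key : ∀ Q T : Matrix (Fin n) (Fin n) ℝ,
      Q * Matrix.transpose Q = 1 → Matrix.transpose Q * Q = 1 →
      T * Matrix.transpose T = 1 → Matrix.transpose T * T = 1 →
      ∀ X A : Matrix (Fin n) (Fin n) ℝ,
        fderiv ℝ U X A = fderiv ℝ U (Q * X * T) (Q * A * T) := by
    intro Q T hQ hQ' hT hT' X A
    set L : Matrix (Fin n) (Fin n) ℝ →L[ℝ] Matrix (Fin n) (Fin n) ℝ :=
      LinearMap.toContinuousLinearMap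
        ((LinearMap.mulRight ℝ T).comp (LinearMap.mulLeft ℝ Q)) with hLdef
    have hL : ∀ Y : Matrix (Fin n) (Fin n) ℝ, L Y = Q * Y * T := fun Y => rfl
    have hUL : U ∘ L = U := by
      funext Y
      show U (Q * Y * T) = U Y
      exact hinv Q T Y hQ hQ' hT hT'
    have h2 : fderiv ℝ (U ∘ L) X = (fderiv ℝ U (L X)).comp (L : _ →L[ℝ] _) := by
      exact (fderiv_comp X (hdiff _) L.differentiableAt).trans (by congr 1; exact L.fderiv)
    have h1 : fderiv ℝ U X = (fderiv ℝ U (L X)).comp (L : _ →L[ℝ] _) := by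
      rw [← h2, hUL]
    have := congrArg (fun (g : Matrix (Fin n) (Fin n) ℝ →L[ℝ] ℝ) => g A) h1
    simpa [hL] using this
  set f : Matrix (Fin n) (Fin n) ℝ →L[ℝ] ℝ := fderiv ℝ U (Matrix.diagonal a) with hf
  -- off-diagonal derivatives vanish
  have hoff : ∀ i j : Fin n, i ≠ j → f (Matrix.single i j 1) = 0 := by
    intro i j hij
    set ε : Matrix (Fin n) (Fin n) ℝ := Matrix.diagonal (fun k => if k = j then -1 else 1)
      with hε
    have hεt : Matrix.transpose ε = ε := Matrix.diagonal_transpose _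
    have hεo : ε * Matrix.transpose ε = 1 := by
      have h1 : (fun k => (if k = j then (-1:ℝ) else 1) * (if k = j then -1 else 1))
          = fun _ => 1 := by
        funext k; by_cases h : k = j <;> simp [h]
      rw [hεt, hε, Matrix.diagonal_mul_diagonal, h1, Matrix.diagonal_one]
    have hεo' : Matrix.transpose ε * ε = 1 := by rw [hεt]; rw [hεt] at hεo; exact hεo
    have hεΛ : ε * Matrix.diagonal a * ε = Matrix.diagonal a := by
      have h1 : (fun k => (if k = j then (-1:ℝ) else 1) * a k * (if k = j then -1 else 1))
          = a := by
        funext k; by_cases h : k = j <;> simp [h] <;> ring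
      rw [hε, Matrix.diagonal_mul_diagonal, Matrix.diagonal_mul_diagonal, h1]
    have hεE : ε * Matrix.single i j 1 * ε = -(Matrix.single i j 1) := by
      ext p q
      rw [hε]
      simp only [Matrix.diagonal_mul, Matrix.mul_diagonal, Matrix.neg_apply,
        Matrix.single, Matrix.of_apply]
      by_cases hp : i = p ∧ j = q
      · obtain ⟨rfl, rfl⟩ := hp
        simp [hij]
      · simp [hp]
    have := key ε ε hεo hεo' hεo hεo' (Matrix.diagonal a) (Matrix.single i j 1)
    rw [hεΛ, hεE] at this
    have h0 : f (Matrix.single i j 1) = -f (Matrix.single i j 1) := by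
      rw [hf] at *
      simpa using this
    linarith
  -- change of basis : fderiv at Λ vs at P
  have hbase : ∀ A : Matrix (Fin n) (Fin n) ℝ,
      f A = fderiv ℝ U P (R * A * Matrix.transpose S) := by
    intro A
    rw [hf, hSVD]
    exact key R (Matrix.transpose S) hR hR'
      (by rwa [Matrix.transpose_transpose]) (by rwa [Matrix.transpose_transpose])
      (Matrix.diagonal a) A
  -- main computation
  ext i j
  have hE : R * (Matrix.transpose R * Matrix.single i j 1 * S) * Matrix.transpose S
      = Matrix.single i j 1 := by
    calc R * (Matrix.transpose R * Matrix.single i j 1 * S) * Matrix.transpose S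
        = (R * Matrix.transpose R) * Matrix.single i j 1 * (S * Matrix.transpose S) := by
          simp only [Matrix.mul_assoc]
      _ = Matrix.single i j 1 := by rw [hR, hS]; simp
  have hG : fderiv ℝ U P (Matrix.single i j 1)
      = f (Matrix.transpose R * Matrix.single i j 1 * S) := by
    rw [hbase, hE]
  -- expand f on the matrix M
  set M : Matrix (Fin n) (Fin n) ℝ := Matrix.transpose R * Matrix.single i j 1 * S
    with hM
  have hMentry : ∀ k l, M k l = R i k * S j l := by
    intro k l
    rw [hM]
    simp [Matrix.mul_apply, Matrix.single, Matrix.transpose_apply, ite_and,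
      Finset.sum_ite_eq, Finset.sum_ite_eq']
  have hfM : f M = ∑ k, ∑ l, M k l * f (Matrix.single k l 1) := by
    conv_lhs => rw [Matrix.matrix_eq_sum_single M]
    rw [map_sum]
    congr 1
    funext k
    rw [map_sum]
    congr 1
    funext l
    have : Matrix.single k l (M k l) = (M k l) • Matrix.single k l 1 := by
      simp
    rw [this, ContinuousLinearMap.map_smul, smul_eq_mul]
  have hfM2 : f M = ∑ k, M k k * f (Matrix.single k k 1) := by
    rw [hfM]
    apply Finset.sum_congr rfl
    intro k _
    rw [Finset.sum_eq_single k]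
    · intro l _ hlk
      rw [hoff k l (Ne.symm hlk), mul_zero]
    · intro h; exact absurd (Finset.mem_univ k) h
  have hRHS : (R * Matrix.diagonal (fun i =>
          fderiv ℝ U (Matrix.diagonal a) (Matrix.single i i 1))
        * Matrix.transpose S) i j
      = ∑ k, (R i k * S j k) * f (Matrix.single k k 1) := by
    simp [Matrix.mul_apply, Matrix.mul_diagonal, Matrix.diagonal_apply, Finset.sum_ite_eq,
      Matrix.transpose_apply, hf]
    apply Finset.sum_congr rfl
    intro k _
    ring
  rw [Matrix.of_apply, hG, hfM2, hRHS]
  apply Finset.sum_congr rfl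
  intro k _
  rw [hMentry]
end

section
/- Let V(z,t) be holomorphic in z on the fluid domain and satisfy the complex Hopf equation V_t + V V_z = 0. Define u − iv = V and p = −v². Then the real velocity field (u,v) and pressure p satisfy the incompressible Euler equations u_t + u u_x + v u_y + p_x = 0, v_t + u v_x + v v_y + p_y = 0, u_x + v_y = 0. -/
open Complex

/-- If V(z,t) is holomorphic in z on an open fluid domain Ω and satisfies the
complex Hopf equation V_t + V V_z = 0, then with u − iv = V and p = −v², the
real fields (u,v,p) satisfy the incompressible Euler equations
u_t + u u_x + v u_y + p_x = 0, v_t + u v_x + v v_y + p_y = 0, u_x + v_y = 0. -/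
theorem stmt_9 (Ω : Set ℂ) (hΩ : IsOpen Ω)
    (V Vt : ℂ → ℝ → ℂ)
    (hhol : ∀ t : ℝ, DifferentiableOn ℂ (fun z => V z t) Ω)
    (hVt : ∀ z ∈ Ω, ∀ t : ℝ, HasDerivAt (fun s => V z s) (Vt z t) t)
    (hHopf : ∀ z ∈ Ω, ∀ t : ℝ,
      Vt z t + V z t * deriv (fun z' => V z' t) z = 0)
    (u v p : ℝ → ℝ → ℝ → ℝ)
    (hu : ∀ x y t, u x y t = (V (x + y * Complex.I) t).re)
    (hv : ∀ x y t, v x y t = -(V (x + y * Complex.I) t).im)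
    (hp : ∀ x y t, p x y t = -(v x y t) ^ 2) :
    ∀ x y t : ℝ, (x + y * Complex.I : ℂ) ∈ Ω →
      (deriv (fun s => u x y s) t
        + u x y t * deriv (fun x' => u x' y t) x
        + v x y t * deriv (fun y' => u x y' t) y
        + deriv (fun x' => p x' y t) x = 0) ∧
      (deriv (fun s => v x y s) t
        + u x y t * deriv (fun x' => v x' y t) x
        + v x y t * deriv (fun y' => v x y' t) y
        + deriv (fun y' => p x y' t) y = 0) ∧
      (deriv (fun x' => u x' y t) x + deriv (fun y' => v x y' t) y = 0) := by
  intro x y t hz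
  set z : ℂ := (x : ℂ) + (y : ℂ) * I with hzdef
  have hdiff : DifferentiableAt ℂ (fun z' => V z' t) z :=
    ((hhol t) z hz).differentiableAt (hΩ.mem_nhds hz)
  set W : ℂ := deriv (fun z' => V z' t) z with hW
  have hVz : HasDerivAt (fun z' => V z' t) W z := hdiff.hasDerivAt
  have hF := hVz.hasFDerivAt.restrictScalars ℝ
  -- x-direction
  have hgx : HasDerivAt (fun x' : ℝ => (x' : ℂ) + (y : ℂ) * I) 1 x := by
    simpa using (Complex.ofRealCLM.hasDerivAt (x := x)).add_const ((y : ℂ) * I)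
  have hVx : HasDerivAt (fun x' : ℝ => V ((x' : ℂ) + (y : ℂ) * I) t) W x := by
    have h1 := hF.comp_hasDerivAt x hgx
    exact h1.congr_deriv (by simp)
  -- y-direction
  have hgy : HasDerivAt (fun y' : ℝ => (x : ℂ) + (y' : ℂ) * I) I y := by
    simpa using ((Complex.ofRealCLM.hasDerivAt (x := y)).mul_const I).const_add (x : ℂ)
  have hVy : HasDerivAt (fun y' : ℝ => V ((x : ℂ) + (y' : ℂ) * I) t) (I * W) y := by
    have h1 := hF.comp_hasDerivAt y hgy
    exact h1.congr_deriv (by simp [mul_comm])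
  -- time
  have hVtd : HasDerivAt (fun s => V z s) (Vt z t) t := hVt z hz t
  -- real/imag parts
  have hre_x : HasDerivAt (fun x' : ℝ => (V ((x' : ℂ) + (y : ℂ) * I) t).re) W.re x := by
    exact Complex.reCLM.hasFDerivAt.comp_hasDerivAt x hVx
  have him_x : HasDerivAt (fun x' : ℝ => (V ((x' : ℂ) + (y : ℂ) * I) t).im) W.im x := by
    exact Complex.imCLM.hasFDerivAt.comp_hasDerivAt x hVx
  have hre_y : HasDerivAt (fun y' : ℝ => (V ((x : ℂ) + (y' : ℂ) * I) t).re) (-W.im) y := by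
    exact (Complex.reCLM.hasFDerivAt.comp_hasDerivAt y hVy).congr_deriv (by simp)
  have him_y : HasDerivAt (fun y' : ℝ => (V ((x : ℂ) + (y' : ℂ) * I) t).im) W.re y := by
    exact (Complex.imCLM.hasFDerivAt.comp_hasDerivAt y hVy).congr_deriv (by simp)
  have hre_t : HasDerivAt (fun s => (V z s).re) (Vt z t).re t := by
    exact Complex.reCLM.hasFDerivAt.comp_hasDerivAt t hVtd
  have him_t : HasDerivAt (fun s => (V z s).im) (Vt z t).im t := by
    exact Complex.imCLM.hasFDerivAt.comp_hasDerivAt t hVtd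
  -- pressure derivatives
  have hvx : HasDerivAt (fun x' : ℝ => -(V ((x' : ℂ) + (y : ℂ) * I) t).im) (-W.im) x :=
    him_x.neg
  have hvy : HasDerivAt (fun y' : ℝ => -(V ((x : ℂ) + (y' : ℂ) * I) t).im) (-W.re) y :=
    him_y.neg
  have hpx : HasDerivAt (fun x' : ℝ => -(-(V ((x' : ℂ) + (y : ℂ) * I) t).im) ^ 2)
      (-(2 * (-(V z t).im) ^ 1 * (-W.im))) x := by
    exact (hvx.pow 2).neg.congr_deriv (by rw [hzdef]; norm_num)
  have hpy : HasDerivAt (fun y' : ℝ => -(-(V ((x : ℂ) + (y' : ℂ) * I) t).im) ^ 2)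
      (-(2 * (-(V z t).im) ^ 1 * (-W.re))) y := by
    exact (hvy.pow 2).neg.congr_deriv (by rw [hzdef]; norm_num)
  have hHz := hHopf z hz t
  rw [← hW] at hHz
  have hre : (Vt z t).re + ((V z t).re * W.re - (V z t).im * W.im) = 0 := by
    have := congrArg Complex.re hHz
    simpa [Complex.add_re, Complex.mul_re] using this
  have him : (Vt z t).im + ((V z t).re * W.im + (V z t).im * W.re) = 0 := by
    have := congrArg Complex.im hHz
    simpa [Complex.add_im, Complex.mul_im] using this
  simp only [hu, hv, hp]
  rw [hre_x.deriv, hvx.deriv, hre_y.deriv, hvy.deriv, hre_t.deriv,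
    (show HasDerivAt (fun s => -(V z s).im) (-(Vt z t).im) t from him_t.neg).deriv, hpx.deriv, hpy.deriv]
  refine ⟨?_, ?_, ?_⟩ <;> nlinarith [hre, him]
end

section
/- Let σ₀ ∈ ℝ, σ_j = ±1, and suppose a : I → ℝ₊ᵈ satisfies the geodesic equations ä_j = βσ_j/a_j with β as in Proposition (β·∑σ_j/a_j² = ∑ȧ_j²/a_j²) and ∏a_j constant. Define φ(x,t) = ½∑_j α_j(t)x_j² − λ(t) with α_j = ȧ_j/a_j and λ̇ = ½βσ₀, and p(x,t) = (β/2)(σ₀ − S(x,a)) with S(x,a) = ∑σ_j x_j²/a_j². Then Δφ = 0, and the Bernoulli equation φ_t + ½|∇φ|² + p = 0 holds pointwise, and p = 0 on {S(x,a) = σ₀}. -/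
/-- Verification of the Dirichlet conic solutions: if a(t) solves the geodesic
equations ä_j = βσ_j/a_j with β·∑σ_j/a_j² = ∑ȧ_j²/a_j² and ∏a_j constant,
and φ(x,t) = ½∑(ȧ_j/a_j)x_j² − λ(t) with λ̇ = ½βσ₀, and
p(x,t) = (β/2)(σ₀ − S(x,a)) with S(x,a) = ∑σ_j x_j²/a_j², then Δφ = 0
(i.e. ∑ ȧ_j/a_j = 0), the Bernoulli equation φ_t + ½|∇φ|² + p = 0 holds
pointwise, and p = 0 on the surface {S(x,a) = σ₀}. -/
theorem stmt_16 (d : ℕ) (σ : Fin d → ℝ) (hσ : ∀ j, σ j = 1 ∨ σ j = -1)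
    (σ₀ : ℝ) (a a' a'' : ℝ → Fin d → ℝ) (β lam : ℝ → ℝ)
    (φ p : (Fin d → ℝ) → ℝ → ℝ)
    (hpos : ∀ t j, 0 < a t j)
    (ha' : ∀ t j, HasDerivAt (fun s => a s j) (a' t j) t)
    (ha'' : ∀ t j, HasDerivAt (fun s => a' s j) (a'' t j) t)
    (hgeo : ∀ t j, a'' t j = β t * σ j / a t j)
    (hβ : ∀ t, β t * (∑ j, σ j / (a t j) ^ 2) = ∑ j, (a' t j) ^ 2 / (a t j) ^ 2)
    (hprod : ∀ s t : ℝ, ∏ j, a s j = ∏ j, a t j)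
    (hlam : ∀ t, HasDerivAt lam (β t * σ₀ / 2) t)
    (hφ : ∀ x t, φ x t = (1 / 2) * (∑ j, (a' t j / a t j) * (x j) ^ 2) - lam t)
    (hp : ∀ x t, p x t = (β t / 2) * (σ₀ - ∑ j, σ j * (x j) ^ 2 / (a t j) ^ 2)) :
    (∀ t, ∑ j, a' t j / a t j = 0) ∧
    (∀ (x : Fin d → ℝ) (t : ℝ),
      deriv (fun s => φ x s) t
        + (1 / 2) * (∑ j, ((a' t j / a t j) * x j) ^ 2)
        + p x t = 0) ∧
    (∀ (x : Fin d → ℝ) (t : ℝ),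
      (∑ j, σ j * (x j) ^ 2 / (a t j) ^ 2) = σ₀ → p x t = 0) := by

  refine ⟨?_, ?_, ?_⟩
  · intro t
    have hd : HasDerivAt (fun s => ∑ j, Real.log (a s j)) (∑ j, a' t j / a t j) t :=
      HasDerivAt.fun_sum (fun j _ => (ha' t j).log (hpos t j).ne')
    have hc : HasDerivAt (fun s => ∑ j, Real.log (a s j)) 0 t := by
      have : (fun s => ∑ j, Real.log (a s j)) = fun _ => Real.log (∏ j, a 0 j) := by
        funext s
        rw [← Real.log_prod (fun j _ => (hpos s j).ne'), hprod s 0]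
      rw [this]; exact hasDerivAt_const t _
    exact hd.unique hc
  · intro x t
    have hterm : ∀ j : Fin d, HasDerivAt (fun s => (a' s j / a s j) * (x j) ^ 2)
        ((a'' t j / a t j - (a' t j / a t j) ^ 2) * (x j) ^ 2) t := by
      intro j
      have h := ((ha'' t j).div (ha' t j) (hpos t j).ne').mul_const ((x j) ^ 2)
      refine h.congr_deriv ?_
      have hne := (hpos t j).ne'
      field_simp
    have hφd : HasDerivAt (fun s => φ x s)
        ((1/2) * (∑ j, (a'' t j / a t j - (a' t j / a t j) ^ 2) * (x j) ^ 2)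
          - β t * σ₀ / 2) t := by
      have heq : (fun s => φ x s)
          = fun s => (1 / 2) * (∑ j, (a' s j / a s j) * (x j) ^ 2) - lam s :=
        funext (fun s => hφ x s)
      rw [heq]
      exact ((HasDerivAt.fun_sum (fun j _ => hterm j)).const_mul (1/2)).sub (hlam t)
    rw [hφd.deriv, hp]
    have key : (∑ j, (a'' t j / a t j - (a' t j / a t j) ^ 2) * (x j) ^ 2)
        + (∑ j, ((a' t j / a t j) * x j) ^ 2)
        = β t * ∑ j, σ j * (x j) ^ 2 / (a t j) ^ 2 := by
      rw [← Finset.sum_add_distrib, Finset.mul_sum]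
      refine Finset.sum_congr rfl (fun j _ => ?_)
      rw [hgeo t j]
      have := (hpos t j).ne'
      field_simp
      ring
    linarith [key]
  · intro x t h
    rw [hp, h]
    ring
end

section
/- The parametrized curve z(u) = tu + u/(u²+1) − i/(u²+1), u ∈ ℝ (the Zubarev–Karabut interface at time t), is a graph over x for every t < −1: the map u ↦ x(u) = tu + u/(u²+1) is strictly decreasing on ℝ. At t = −1, x'(0) = x''(0) = 0 while x'''(0) ≠ 0, and near u = 0 the curve satisfies y + 1 = u² + O(u⁴) and x = O(u³), so y ~ −1 + c|x|^{2/3} (a cusp forms). -/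
open Asymptotics

private lemma hd1 (t u : ℝ) :
    HasDerivAt (fun u : ℝ => t * u + u / (u ^ 2 + 1))
      (t + (1 - u ^ 2) / ((u ^ 2 + 1) ^ 2)) u := by
  have h0 : (u ^ 2 + 1) ≠ 0 := by positivity
  have hden : HasDerivAt (fun u : ℝ => u ^ 2 + 1) (2 * u) u := by
    simpa using (hasDerivAt_pow 2 u).add_const 1
  have h := ((hasDerivAt_id u).div hden h0)
  have h2 := ((hasDerivAt_id u).const_mul t).add h
  refine h2.congr_deriv ?_
  field_simp
  simp only [id]
  ring

private lemma hd2 (u : ℝ) :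
    HasDerivAt (fun u : ℝ => (-1 : ℝ) + (1 - u ^ 2) / ((u ^ 2 + 1) ^ 2))
      ((2 * u ^ 3 - 6 * u) / ((u ^ 2 + 1) ^ 3)) u := by
  have h0 : ((u ^ 2 + 1) ^ 2) ≠ 0 := by positivity
  have hnum : HasDerivAt (fun u : ℝ => 1 - u ^ 2) (-(2 * u)) u := by
    simpa using (hasDerivAt_pow 2 u).const_sub 1
  have hden : HasDerivAt (fun u : ℝ => (u ^ 2 + 1) ^ 2) (2 * (u ^ 2 + 1) * (2 * u)) u := by
    have : HasDerivAt (fun u : ℝ => u ^ 2 + 1) (2 * u) u := by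
      simpa using (hasDerivAt_pow 2 u).add_const 1
    refine (this.pow 2).congr_deriv ?_
    norm_num
  have h := (hnum.div hden h0).const_add (-1 : ℝ)
  refine h.congr_deriv ?_
  have h1 : (u ^ 2 + 1) ≠ 0 := by positivity
  field_simp
  ring

private lemma hd3 :
    HasDerivAt (fun u : ℝ => (2 * u ^ 3 - 6 * u) / ((u ^ 2 + 1) ^ 3)) (-6) 0 := by
  have h0 : (((0:ℝ) ^ 2 + 1) ^ 3) ≠ 0 := by norm_num
  have hnum : HasDerivAt (fun u : ℝ => 2 * u ^ 3 - 6 * u) (-6) 0 := by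
    have h1 : HasDerivAt (fun u : ℝ => u ^ 3) (3 * (0:ℝ) ^ 2) 0 := by
      simpa using hasDerivAt_pow 3 (0:ℝ)
    have h2 := (h1.const_mul 2).sub ((hasDerivAt_id (0:ℝ)).const_mul 6)
    refine h2.congr_deriv ?_
    norm_num
  have hden : HasDerivAt (fun u : ℝ => (u ^ 2 + 1) ^ 3) 0 0 := by
    have h1 : HasDerivAt (fun u : ℝ => u ^ 2 + 1) (2 * (0:ℝ)) 0 := by
      simpa using (hasDerivAt_pow 2 (0:ℝ)).add_const 1
    refine (h1.pow 3).congr_deriv ?_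
    norm_num
  have h := hnum.div hden h0
  refine h.congr_deriv ?_
  norm_num

/-- The Zubarev–Karabut interface z(u) = tu + u/(u²+1) − i/(u²+1):
for t < −1 the map u ↦ x(u) = tu + u/(u²+1) is strictly decreasing (the
interface is a graph over x); at t = −1 one has x'(0) = x''(0) = 0 while
x'''(0) = −6 ≠ 0, and near u = 0, y + 1 = u² + O(u⁴) while x = O(u³)
(a 2/3-power cusp forms). -/
theorem stmt_19 :
    (∀ t : ℝ, t < -1 →
      StrictAnti (fun u : ℝ => t * u + u / (u ^ 2 + 1))) ∧
    (iteratedDeriv 1 (fun u : ℝ => (-1) * u + u / (u ^ 2 + 1)) 0 = 0 ∧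
     iteratedDeriv 2 (fun u : ℝ => (-1) * u + u / (u ^ 2 + 1)) 0 = 0 ∧
     iteratedDeriv 3 (fun u : ℝ => (-1) * u + u / (u ^ 2 + 1)) 0 = -6) ∧
    ((fun u : ℝ => (-1) / (u ^ 2 + 1) + 1 - u ^ 2)
        =O[nhds (0 : ℝ)] fun u : ℝ => u ^ 4) ∧
    ((fun u : ℝ => (-1) * u + u / (u ^ 2 + 1))
        =O[nhds (0 : ℝ)] fun u : ℝ => u ^ 3) := by
  have hderiv : ∀ t : ℝ, deriv (fun u : ℝ => t * u + u / (u ^ 2 + 1)) =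
      fun u => t + (1 - u ^ 2) / ((u ^ 2 + 1) ^ 2) := by
    intro t; funext u; exact (hd1 t u).deriv
  refine ⟨?_, ⟨?_, ?_, ?_⟩, ?_, ?_⟩
  · intro t ht
    apply strictAnti_of_deriv_neg
    intro u
    rw [hderiv t]
    have h0 : (0:ℝ) < u ^ 2 + 1 := by positivity
    have hle : (1 - u ^ 2) / ((u ^ 2 + 1) ^ 2) ≤ 1 := by
      rw [div_le_one (by positivity)]
      nlinarith
    linarith
  · rw [iteratedDeriv_one, hderiv (-1)]
    norm_num
  · rw [iteratedDeriv_succ, iteratedDeriv_one, hderiv (-1)]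
    have : deriv (fun u : ℝ => (-1:ℝ) + (1 - u ^ 2) / ((u ^ 2 + 1) ^ 2)) 0 = 0 := by
      have := (hd2 0).deriv
      simp at this
      simpa using this
    simpa using this
  · rw [iteratedDeriv_succ, iteratedDeriv_succ, iteratedDeriv_one, hderiv (-1)]
    have hg1 : deriv (fun u : ℝ => (-1:ℝ) + (1 - u ^ 2) / ((u ^ 2 + 1) ^ 2)) =
        fun u => (2 * u ^ 3 - 6 * u) / ((u ^ 2 + 1) ^ 3) := by
      funext u; exact (hd2 u).deriv
    rw [hg1]
    exact hd3.deriv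
  · apply Asymptotics.isBigO_of_le
    intro u
    have h0 : (0:ℝ) < u ^ 2 + 1 := by positivity
    have heq : (-1:ℝ) / (u ^ 2 + 1) + 1 - u ^ 2 = -u ^ 4 / (u ^ 2 + 1) := by
      field_simp; ring
    rw [heq, Real.norm_eq_abs, Real.norm_eq_abs, abs_div, abs_neg, abs_of_pos h0]
    exact div_le_self (abs_nonneg _) (by nlinarith)
  · apply Asymptotics.isBigO_of_le
    intro u
    have h0 : (0:ℝ) < u ^ 2 + 1 := by positivity
    have heq : (-1:ℝ) * u + u / (u ^ 2 + 1) = -u ^ 3 / (u ^ 2 + 1) := by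
      field_simp; ring
    rw [heq, Real.norm_eq_abs, Real.norm_eq_abs, abs_div, abs_neg, abs_of_pos h0]
    exact div_le_self (abs_nonneg _) (by nlinarith)
end
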